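/- arXiv:1707.09276 — 2 statements merged into one kernel-verified Lean document; each statement's English description precedes it below -/
import Mathlib

section
/- For every integer m ≥ 0 there exist finite positive constants c and C₀ (depending only on m) such that for every integer n ≥ 1 and every real N > 0, P( sup_{y ∈ I_n} e^{−y²/2} |P_n^{(m)}(y)| > N n^{m/2} ) ≤ C₀ n e^{−c N²}, where I_n = [−n^{1/2} + n^{1/6} log n, n^{1/2} − n^{1/6} log n] and P_n^{(m)} denotes the m-th derivative of the Weyl polynomial P_n. -/
open MeasureTheory ProbabilityTheory Real Filter Topology
open scoped BigOperators Classical ENNReal NNReal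

noncomputable section

/-- The Weyl polynomial `P_n(x) = ∑_{k=0}^n ξ_k x^k / √(k!)` as a `Polynomial ℝ`. -/
def weylPoly {Ω : Type*} (ξ : ℕ → Ω → ℝ) (n : ℕ) (ω : Ω) : Polynomial ℝ :=
  ∑ k ∈ Finset.range (n + 1),
    Polynomial.C (ξ k ω / Real.sqrt (Nat.factorial k)) * Polynomial.X ^ k

/-- The Weyl series `P_∞(x) = ∑_{k=0}^∞ ξ_k x^k / √(k!)`. -/
def weylSeries {Ω : Type*} (ξ : ℕ → Ω → ℝ) (ω : Ω) (x : ℝ) : ℝ :=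
  ∑' k : ℕ, ξ k ω * x ^ k / Real.sqrt (Nat.factorial k)

/-- Covariance of the 2-jet of the Weyl series at points `s`, `t`:
`weylCov s t a b = E[P_∞^{(a)}(s) P_∞^{(b)}(t)]` for `a b : Fin 2`,
computed from the covariance kernel `E[P_∞(s)P_∞(t)] = e^{st}`. -/
def weylCov (s t : ℝ) (a b : Fin 2) : ℝ :=
  (if a = 0 then (if b = 0 then 1 else s) else (if b = 0 then t else 1 + s * t)) *
    Real.exp (s * t)

/-- The covariance matrix `Γ` of `(P_∞(x_1), P_∞'(x_1), …, P_∞(x_k), P_∞'(x_k))`. -/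
def weylGamma {k : ℕ} (x : Fin k → ℝ) :
    Matrix (Fin k × Fin 2) (Fin k × Fin 2) ℝ :=
  fun p q => weylCov (x p.1) (x q.1) p.2 q.2

/-- The vector `η = (0, η_1, 0, η_2, …, 0, η_k) ∈ ℝ^{2k}`. -/
def weylEta {k : ℕ} (η : Fin k → ℝ) : Fin k × Fin 2 → ℝ :=
  fun p => if p.2 = 1 then η p.1 else 0

/-- The `k`-point correlation function of the real zeros of the Weyl series, given by the
Kac–Rice formula `ρ_k(x) = (2π)^{-k} |det Γ|^{-1/2} ∫_{ℝ^k} |η_1⋯η_k| exp(-½⟨Γ⁻¹η, η⟩) dη`. -/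
def weylRho (k : ℕ) (x : Fin k → ℝ) : ℝ :=
  ((2 * Real.pi) ^ k)⁻¹ * (Real.sqrt |(weylGamma x).det|)⁻¹ *
    ∫ η : Fin k → ℝ,
      (∏ i, |η i|) *
        Real.exp (-(1 / 2) *
          ∑ p, (weylGamma x)⁻¹.mulVec (weylEta η) p * weylEta η p)

/-- The constant `K = 1/π + ∫_ℝ (ρ₂(0,t) − 1/π²) dt`. -/
def weylK : ℝ :=
  1 / Real.pi + ∫ t : ℝ, (weylRho 2 ![0, t] - 1 / Real.pi ^ 2)

/-- The interval `I_n = [−√n + n^{1/6} log n, √n − n^{1/6} log n]`. -/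
def weylIntvl (n : ℕ) : Set ℝ :=
  Set.Icc (-Real.sqrt n + (n : ℝ) ^ ((1 : ℝ) / 6) * Real.log n)
    (Real.sqrt n - (n : ℝ) ^ ((1 : ℝ) / 6) * Real.log n)


lemma wpd_pdf_eq (x : ℝ) :
    gaussianPDFReal 0 1 x = (Real.sqrt (2 * Real.pi))⁻¹ * Real.exp (-x ^ 2 / 2) := by
  simp [gaussianPDFReal, NNReal.coe_one]

lemma wpd_integral_gauss (f : ℝ → ℝ) (hf : Measurable f) :
    ∫ x, f x ∂(gaussianReal 0 1) = ∫ x, f x * gaussianPDFReal 0 1 x := by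
  rw [gaussianReal_of_var_ne_zero 0 one_ne_zero]
  have hm : Measurable fun x => (gaussianPDFReal 0 1 x).toNNReal :=
    (measurable_gaussianPDFReal 0 1).real_toNNReal
  have h2 : gaussianPDF 0 1 = fun x => ((gaussianPDFReal 0 1 x).toNNReal : ℝ≥0∞) := by
    funext x; simp [gaussianPDF, ENNReal.ofReal]
  rw [h2, integral_withDensity_eq_integral_smul hm]
  congr 1
  funext x
  rw [NNReal.smul_def, smul_eq_mul, Real.coe_toNNReal _ (gaussianPDFReal_nonneg 0 1 x), mul_comm]

lemma wpd_integrable_gauss (f : ℝ → ℝ) (hf : Measurable f)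
    (hi : Integrable (fun x => f x * gaussianPDFReal 0 1 x)) :
    Integrable f (gaussianReal 0 1) := by
  rw [gaussianReal_of_var_ne_zero 0 one_ne_zero]
  have hm : Measurable fun x => (gaussianPDFReal 0 1 x).toNNReal :=
    (measurable_gaussianPDFReal 0 1).real_toNNReal
  have h2 : gaussianPDF 0 1 = fun x => ((gaussianPDFReal 0 1 x).toNNReal : ℝ≥0∞) := by
    funext x; simp [gaussianPDF, ENNReal.ofReal]
  rw [h2, integrable_withDensity_iff hm.coe_nnreal_ennreal]
  · apply hi.congr
    filter_upwards with x
    rw [ENNReal.coe_toReal, Real.coe_toNNReal _ (gaussianPDFReal_nonneg 0 1 x)]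
  · filter_upwards with x
    exact ENNReal.coe_lt_top

lemma wpd_key1 (c x : ℝ) : Real.exp (c * x) * gaussianPDFReal 0 1 x
    = (Real.sqrt (2 * Real.pi))⁻¹ * Real.exp (c ^ 2 / 2) *
      Real.exp (-(1/2) * (x - c) ^ 2) := by
  rw [wpd_pdf_eq, mul_left_comm, ← Real.exp_add, mul_assoc, ← Real.exp_add]
  congr 2
  ring

lemma wpd_exp_mul_integrable (c : ℝ) :
    Integrable (fun x => Real.exp (c * x) * gaussianPDFReal 0 1 x) := by
  simp_rw [wpd_key1 c]
  exact ((integrable_exp_neg_mul_sq (by norm_num : (0:ℝ) < 1/2)).comp_sub_right c).const_mul _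

lemma wpd_exp_mul_integrable' (c : ℝ) :
    Integrable (fun x => Real.exp (c * x)) (gaussianReal 0 1) :=
  wpd_integrable_gauss _ (by fun_prop) (wpd_exp_mul_integrable c)

/-- mgf of the standard gaussian. -/
lemma wpd_gauss_mgf (c : ℝ) :
    ∫ x, Real.exp (c * x) ∂(gaussianReal 0 1) = Real.exp (c ^ 2 / 2) := by
  rw [wpd_integral_gauss _ (by fun_prop)]
  simp_rw [wpd_key1 c]
  rw [integral_const_mul]
  have h1 : ∫ x : ℝ, Real.exp (-(1/2) * (x - c) ^ 2)
      = ∫ x : ℝ, Real.exp (-(1/2) * x ^ 2) :=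
    integral_sub_right_eq_self (fun x => Real.exp (-(1/2) * x ^ 2)) c
  have h2 : Real.sqrt (Real.pi / (1/2)) = Real.sqrt (2 * Real.pi) := by
    congr 1; ring
  rw [h1, integral_gaussian, h2, mul_right_comm,
    inv_mul_cancel₀ (by positivity : Real.sqrt (2 * Real.pi) ≠ 0), one_mul]

lemma wpd_key2 (x : ℝ) : Real.exp (x ^ 2 / 4) * gaussianPDFReal 0 1 x
    = (Real.sqrt (2 * Real.pi))⁻¹ * Real.exp (-(1/4) * x ^ 2) := by
  rw [wpd_pdf_eq, mul_left_comm, ← Real.exp_add]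
  congr 2
  ring

lemma wpd_gauss_exp_quarter_sq :
    ∫ x, Real.exp (x ^ 2 / 4) ∂(gaussianReal 0 1) = Real.sqrt 2 := by
  rw [wpd_integral_gauss _ (by fun_prop)]
  simp_rw [wpd_key2]
  rw [integral_const_mul, integral_gaussian]
  have h2 : Real.sqrt (Real.pi / (1/4)) = Real.sqrt 2 * Real.sqrt (2 * Real.pi) := by
    rw [← Real.sqrt_mul (by norm_num)]
    congr 1; ring
  rw [h2, mul_left_comm, inv_mul_cancel₀ (by positivity : Real.sqrt (2 * Real.pi) ≠ 0), mul_one]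

lemma wpd_exp_quarter_sq_integrable :
    Integrable (fun x => Real.exp (x ^ 2 / 4)) (gaussianReal 0 1) := by
  apply wpd_integrable_gauss _ (by fun_prop)
  simp_rw [wpd_key2]
  exact (integrable_exp_neg_mul_sq (by norm_num : (0:ℝ) < 1/4)).const_mul _

section Det

/-- Coefficient functions of the `m`-th derivative of the Weyl polynomial. -/
def wpdB (m k : ℕ) (y : ℝ) : ℝ :=
  (Nat.descFactorial k m : ℝ) * y ^ (k - m) / Real.sqrt (Nat.factorial k)

lemma wpd_eval_iter {Ω : Type*} (ξ : ℕ → Ω → ℝ) (n : ℕ) (ω : Ω) (m : ℕ) (y : ℝ) :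
    (Polynomial.derivative^[m] (weylPoly ξ n ω)).eval y
      = ∑ k ∈ Finset.range (n+1), ξ k ω * wpdB m k y := by
  rw [weylPoly, Polynomial.iterate_derivative_sum]
  rw [Polynomial.eval_finset_sum]
  refine Finset.sum_congr rfl fun k _ => ?_
  rw [Polynomial.iterate_derivative_C_mul, Polynomial.iterate_derivative_X_pow_eq_C_mul,
    Polynomial.eval_mul, Polynomial.eval_C, Polynomial.eval_mul, Polynomial.eval_C,
    Polynomial.eval_pow, Polynomial.eval_X, wpdB]
  ring

lemma wpd_b_sq_sum (m n : ℕ) (y : ℝ) :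
    ∑ k ∈ Finset.range (n+1), (wpdB m k y)^2
      ≤ (m+1 : ℝ) * (n : ℝ)^m * Real.exp (y^2) := by
  have hterm : ∀ k ∈ Finset.range (n+1),
      (wpdB m k y)^2 ≤ (n : ℝ)^m * ((y^2) ^ (k - m) / (Nat.factorial (k - m) : ℝ)) := by
    intro k hk
    rw [Finset.mem_range] at hk
    rw [wpdB, div_pow, mul_pow]
    have hfac : (0 : ℝ) < (Nat.factorial k : ℝ) := by exact_mod_cast Nat.factorial_pos k
    rw [Real.sq_sqrt hfac.le]
    have hyp : (y ^ (k - m))^2 = (y^2) ^ (k - m) := by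
      rw [← pow_mul, ← pow_mul, Nat.mul_comm]
    rw [hyp]
    by_cases hkm : m ≤ k
    · have hdf : ((k - m).factorial * k.descFactorial m) = k.factorial :=
        Nat.factorial_mul_descFactorial hkm
      have hdle : (k.descFactorial m : ℝ) ≤ (n : ℝ)^m := by
        have h1 : k.descFactorial m ≤ k ^ m := Nat.descFactorial_le_pow k m
        have h2 : k ^ m ≤ n ^ m := Nat.pow_le_pow_left (by omega) m
        exact_mod_cast le_trans h1 h2
      have hfac2 : (0 : ℝ) < (Nat.factorial (k - m) : ℝ) := by
        exact_mod_cast Nat.factorial_pos (k - m)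
      have hkey : ((k.descFactorial m : ℝ))^2 / (Nat.factorial k : ℝ)
          ≤ (n : ℝ)^m / (Nat.factorial (k - m) : ℝ) := by
        rw [div_le_div_iff₀ hfac hfac2]
        have : ((k.descFactorial m : ℝ))^2 * (Nat.factorial (k - m) : ℝ)
            = (k.descFactorial m : ℝ) * (Nat.factorial k : ℝ) := by
          rw [sq, mul_assoc, mul_comm (k.descFactorial m : ℝ) ((k-m).factorial : ℝ)]
          congr 1
          exact_mod_cast hdf
        rw [this]
        exact mul_le_mul_of_nonneg_right hdle (by positivity)
      calc (k.descFactorial m : ℝ)^2 * (y^2)^(k-m) / (Nat.factorial k : ℝ)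
          = ((k.descFactorial m : ℝ)^2 / (Nat.factorial k : ℝ)) * (y^2)^(k-m) := by ring
        _ ≤ ((n : ℝ)^m / (Nat.factorial (k - m) : ℝ)) * (y^2)^(k-m) := by
            exact mul_le_mul_of_nonneg_right hkey (by positivity)
        _ = (n : ℝ)^m * ((y^2)^(k-m) / (Nat.factorial (k - m) : ℝ)) := by ring
    · have : k.descFactorial m = 0 := Nat.descFactorial_eq_zero_iff_lt.mpr (by omega)
      have h0 : ((Nat.descFactorial k m : ℕ) : ℝ) = 0 := by rw [this]; simp
      rw [h0]
      simp only [ne_eq, OfNat.ofNat_ne_zero, not_false_eq_true, zero_pow, zero_mul, zero_div]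
      positivity
  refine le_trans (Finset.sum_le_sum hterm) ?_
  rw [← Finset.mul_sum]
  rw [show (m+1 : ℝ) * (n : ℝ)^m * Real.exp (y^2) = (n:ℝ)^m * ((m+1 : ℝ) * Real.exp (y^2)) by ring]
  apply mul_le_mul_of_nonneg_left ?_ (by positivity)
  -- ∑_{k ∈ range (n+1)} (y²)^(k-m)/(k-m)! ≤ (m+1) exp(y²)
  by_cases hm : ¬ (m ≤ n + 1)
  · have hone : ∀ k ∈ Finset.range (n+1),
        (y^2)^(k-m) / (Nat.factorial (k-m) : ℝ) = 1 := by
      intro k hk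
      rw [Finset.mem_range] at hk
      rw [show k - m = 0 by omega]
      simp
    rw [Finset.sum_congr rfl hone, Finset.sum_const, Finset.card_range, nsmul_eq_mul, mul_one]
    have hexp1 : (1 : ℝ) ≤ Real.exp (y^2) := Real.one_le_exp (sq_nonneg y)
    have hnm : (n : ℝ) + 1 ≤ (m : ℝ) + 1 := by
      have : n + 1 ≤ m + 1 := by omega
      exact_mod_cast this
    push_cast
    nlinarith [Nat.cast_nonneg (α := ℝ) n]
  rw [not_not] at hm
  have hsplit : Finset.range (n+1) = Finset.Ico 0 m ∪ Finset.Ico m (n+1) := by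
    rw [Finset.range_eq_Ico]
    exact (Finset.Ico_union_Ico_eq_Ico (Nat.zero_le m) (by omega)).symm
  rw [hsplit, Finset.sum_union (Finset.Ico_disjoint_Ico_consecutive 0 m (n+1))]
  have h1 : ∑ k ∈ Finset.Ico 0 m, (y^2)^(k-m) / (Nat.factorial (k-m) : ℝ) = m := by
    rw [Finset.sum_congr rfl (fun k hk => ?_)]
    · rw [Finset.sum_const, Nat.card_Ico, Nat.sub_zero, nsmul_eq_mul, mul_one]
    · rw [Finset.mem_Ico] at hk
      rw [show k - m = 0 by omega]
      simp
  have h2 : ∑ k ∈ Finset.Ico m (n+1), (y^2)^(k-m) / (Nat.factorial (k-m) : ℝ)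
      ≤ Real.exp (y^2) := by
    rw [Finset.sum_Ico_eq_sum_range]
    have he : ∀ i, (y^2)^((m+i)-m) / (Nat.factorial ((m+i)-m) : ℝ)
        = (y^2)^i / (Nat.factorial i : ℝ) := by
      intro i
      have hmi : m + i - m = i := by omega
      rw [hmi]
    rw [Finset.sum_congr rfl (fun i _ => he i)]
    exact Real.sum_le_exp_of_nonneg (sq_nonneg y) _
  have hexp1 : (1 : ℝ) ≤ Real.exp (y^2) := Real.one_le_exp (sq_nonneg y)
  rw [h1]
  have : (m : ℝ) ≤ m * Real.exp (y^2) := by nlinarith [Nat.cast_nonneg (α := ℝ) m]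
  linarith

end Det

lemma wpd_rpow_eq (n m : ℕ) : (n:ℝ) ^ ((m:ℝ)/2) = Real.sqrt ((n:ℝ)^m) := by
  rw [show (m:ℝ)/2 = (m:ℝ) * (1/2) by ring, Real.rpow_mul (Nat.cast_nonneg n),
    Real.rpow_natCast, ← Real.sqrt_eq_rpow]

/-- Cauchy–Schwarz bound for the derivative coefficients. -/
lemma wpd_cs (w : ℕ → ℝ) (l n : ℕ) (z : ℝ) :
    |∑ k ∈ Finset.range (n+1), w k * wpdB l k z|
      ≤ Real.sqrt (∑ k ∈ Finset.range (n+1), (w k)^2) *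
        (Real.sqrt ((l+1 : ℝ) * (n:ℝ)^l) * Real.exp (z^2/2)) := by
  have hcs := Finset.sum_mul_sq_le_sq_mul_sq (Finset.range (n+1)) w (fun k => wpdB l k z)
  have hb := wpd_b_sq_sum l n z
  have h1 : (∑ k ∈ Finset.range (n+1), w k * wpdB l k z)^2
      ≤ (∑ k ∈ Finset.range (n+1), (w k)^2) * ((l+1 : ℝ) * (n:ℝ)^l * Real.exp (z^2)) := by
    refine le_trans hcs ?_
    exact mul_le_mul_of_nonneg_left hb (by positivity)
  have habs : |∑ k ∈ Finset.range (n+1), w k * wpdB l k z|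
      = Real.sqrt ((∑ k ∈ Finset.range (n+1), w k * wpdB l k z)^2) :=
    (Real.sqrt_sq_eq_abs _).symm
  rw [habs]
  refine le_trans (Real.sqrt_le_sqrt h1) ?_
  rw [Real.sqrt_mul (by positivity), Real.sqrt_mul (by positivity), ← Real.exp_half]

section Tail

variable {Ω : Type*} [MeasureSpace Ω] [IsProbabilityMeasure (ℙ : Measure Ω)]
    (ξ : ℕ → Ω → ℝ)
    (hmeas : ∀ k, Measurable (ξ k))
    (hdist : ∀ k, Measure.map (ξ k) ℙ = gaussianReal 0 1)
    (hindep : iIndepFun ξ ℙ)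

include hmeas hdist

/-- Integrability of `exp (c · ξ k)`. -/
lemma wpd_int_exp (c : ℝ) (k : ℕ) :
    Integrable (fun ω => Real.exp (c * ξ k ω)) ℙ := by
  have h := wpd_exp_mul_integrable' c
  rw [← hdist k] at h
  exact (integrable_map_measure
    (by fun_prop : Measurable fun x : ℝ => Real.exp (c * x)).aestronglyMeasurable
    (hmeas k).aemeasurable).mp h

/-- mgf of `a k * ξ k`. -/
lemma wpd_mgf_single (c : ℝ) (k : ℕ) :
    ∫ ω, Real.exp (c * ξ k ω) ∂ℙ = Real.exp (c ^ 2 / 2) := by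
  calc ∫ ω, Real.exp (c * ξ k ω) ∂ℙ
      = ∫ x, Real.exp (c * x) ∂(Measure.map (ξ k) ℙ) :=
        (integral_map (hmeas k).aemeasurable
          (by fun_prop : Measurable fun x : ℝ => Real.exp (c * x)).aestronglyMeasurable).symm
    _ = Real.exp (c ^ 2 / 2) := by rw [hdist k]; exact wpd_gauss_mgf c

include hindep

/-- One-sided tail for linear combinations of the `ξ k`. -/
lemma wpd_lin_tail_one (a : ℕ → ℝ) (n : ℕ) (v t : ℝ) (hv : 0 < v)
    (hsum : ∑ k ∈ Finset.range (n+1), (a k)^2 ≤ v) (ht : 0 < t) :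
    ℙ {ω | t ≤ ∑ k ∈ Finset.range (n+1), a k * ξ k ω}
      ≤ ENNReal.ofReal (Real.exp (-t^2/(2*v))) := by
  classical
  set X : ℕ → Ω → ℝ := fun k ω => a k * ξ k ω with hX
  have hXmeas : ∀ k, Measurable (X k) := fun k => (hmeas k).const_mul _
  have hXindep : iIndepFun X ℙ :=
    hindep.comp (fun k x => a k * x) (fun k => measurable_const_mul _)
  set s : ℝ := t / v with hs
  have hs0 : 0 ≤ s := le_of_lt (div_pos ht hv)
  have hint : ∀ k ∈ Finset.range (n+1),
      Integrable (fun ω => Real.exp (s * X k ω)) ℙ := by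
    intro k _
    have := wpd_int_exp ξ hmeas hdist (s * a k) k
    apply this.congr
    filter_upwards with ω
    rw [hX]; ring_nf
  have hintS : Integrable (fun ω => Real.exp (s * (∑ k ∈ Finset.range (n+1), X k) ω)) ℙ :=
    hXindep.integrable_exp_mul_sum hXmeas hint
  have hch := measure_ge_le_exp_mul_mgf (μ := ℙ) (X := ∑ k ∈ Finset.range (n+1), X k)
      t hs0 hintS
  have hmgf : mgf (∑ k ∈ Finset.range (n+1), X k) ℙ s
      = ∏ k ∈ Finset.range (n+1), Real.exp ((s * a k) ^ 2 / 2) := by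
    rw [hXindep.mgf_sum hXmeas]
    refine Finset.prod_congr rfl fun k _ => ?_
    rw [mgf]
    rw [← wpd_mgf_single ξ hmeas hdist (s * a k) k]
    congr 1; funext ω; rw [hX]; ring_nf
  have hprod : ∏ k ∈ Finset.range (n+1), Real.exp ((s * a k) ^ 2 / 2)
      = Real.exp (s^2 * (∑ k ∈ Finset.range (n+1), (a k)^2) / 2) := by
    rw [← Real.exp_sum]
    congr 1
    rw [Finset.mul_sum, Finset.sum_div]
    refine Finset.sum_congr rfl fun k _ => ?_
    ring
  have hexp_le : Real.exp (-s * t) * mgf (∑ k ∈ Finset.range (n+1), X k) ℙ s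
      ≤ Real.exp (-t^2/(2*v)) := by
    rw [hmgf, hprod, ← Real.exp_add]
    apply Real.exp_le_exp.mpr
    have h1 : s ^ 2 * (∑ k ∈ Finset.range (n+1), (a k)^2) / 2 ≤ s^2 * v / 2 := by
      have : 0 ≤ s ^ 2 := sq_nonneg s
      nlinarith
    have h2 : -s * t + s ^ 2 * v / 2 = -t^2/(2*v) := by
      rw [hs]
      field_simp
      ring
    linarith
  have hset : {ω | t ≤ ∑ k ∈ Finset.range (n+1), a k * ξ k ω}
      = {ω | t ≤ (∑ k ∈ Finset.range (n+1), X k) ω} := by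
    ext ω; simp [hX, Finset.sum_apply]
  rw [hset]
  rw [← ENNReal.ofReal_toReal (measure_ne_top ℙ _)]
  exact ENNReal.ofReal_le_ofReal (le_trans hch hexp_le)

/-- Two-sided tail for linear combinations. -/
lemma wpd_lin_tail (a : ℕ → ℝ) (n : ℕ) (v t : ℝ) (hv : 0 < v)
    (hsum : ∑ k ∈ Finset.range (n+1), (a k)^2 ≤ v) (ht : 0 < t) :
    ℙ {ω | t ≤ |∑ k ∈ Finset.range (n+1), a k * ξ k ω|}
      ≤ ENNReal.ofReal (2 * Real.exp (-t^2/(2*v))) := by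
  have hsub : {ω | t ≤ |∑ k ∈ Finset.range (n+1), a k * ξ k ω|}
      ⊆ {ω | t ≤ ∑ k ∈ Finset.range (n+1), a k * ξ k ω}
        ∪ {ω | t ≤ ∑ k ∈ Finset.range (n+1), (-a) k * ξ k ω} := by
    intro ω hω
    simp only [Set.mem_setOf_eq] at hω
    rcases abs_cases (∑ k ∈ Finset.range (n+1), a k * ξ k ω) with ⟨h, _⟩ | ⟨h, _⟩
    · left; exact Set.mem_setOf_eq ▸ (h ▸ hω)
    · right
      simp only [Set.mem_setOf_eq, Pi.neg_apply]
      have : ∑ k ∈ Finset.range (n+1), -a k * ξ k ω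
          = -∑ k ∈ Finset.range (n+1), a k * ξ k ω := by
        rw [← Finset.sum_neg_distrib]
        exact Finset.sum_congr rfl fun k _ => by ring
      rw [this, ← h]
      exact hω
  calc ℙ {ω | t ≤ |∑ k ∈ Finset.range (n+1), a k * ξ k ω|}
      ≤ ℙ ({ω | t ≤ ∑ k ∈ Finset.range (n+1), a k * ξ k ω}
        ∪ {ω | t ≤ ∑ k ∈ Finset.range (n+1), (-a) k * ξ k ω}) := measure_mono hsub
    _ ≤ ℙ {ω | t ≤ ∑ k ∈ Finset.range (n+1), a k * ξ k ω}
        + ℙ {ω | t ≤ ∑ k ∈ Finset.range (n+1), (-a) k * ξ k ω} := measure_union_le _ _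
    _ ≤ ENNReal.ofReal (Real.exp (-t^2/(2*v))) + ENNReal.ofReal (Real.exp (-t^2/(2*v))) := by
        gcongr
        · exact wpd_lin_tail_one ξ hmeas hdist hindep a n v t hv hsum ht
        · refine wpd_lin_tail_one ξ hmeas hdist hindep (-a) n v t hv ?_ ht
          simpa using hsum
    _ = ENNReal.ofReal (2 * Real.exp (-t^2/(2*v))) := by
        rw [← ENNReal.ofReal_add (Real.exp_nonneg _) (Real.exp_nonneg _)]
        congr 1; ring

/-- Chi-square tail bound. -/
lemma wpd_sq_tail (n : ℕ) (R : ℝ) (hR : 0 ≤ R) :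
    ℙ {ω | R ≤ ∑ k ∈ Finset.range (n+1), (ξ k ω)^2}
      ≤ ENNReal.ofReal (Real.exp (-R/4) * Real.sqrt 2 ^ (n+1)) := by
  classical
  set X : ℕ → Ω → ℝ := fun k ω => (ξ k ω)^2 with hX
  have hXmeas : ∀ k, Measurable (X k) := fun k => (hmeas k).pow_const 2
  have hXindep : iIndepFun X ℙ :=
    hindep.comp (fun k x => x^2) (fun k => measurable_id.pow_const 2)
  have hint1 : ∀ k : ℕ, Integrable (fun ω => Real.exp ((1/4) * X k ω)) ℙ := by
    intro k
    have h := wpd_exp_quarter_sq_integrable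
    rw [← hdist k] at h
    have h2 := (integrable_map_measure
      (by fun_prop : Measurable fun x : ℝ => Real.exp (x ^ 2 / 4)).aestronglyMeasurable
      (hmeas k).aemeasurable).mp h
    apply h2.congr
    filter_upwards with ω
    show Real.exp ((ξ k ω) ^ 2 / 4) = Real.exp ((1/4) * X k ω)
    rw [hX]; congr 1; ring
  have hmgf1 : ∀ k : ℕ, ∫ ω, Real.exp ((1/4) * X k ω) ∂ℙ = Real.sqrt 2 := by
    intro k
    have he : (fun ω => Real.exp ((1/4) * X k ω)) = fun ω => Real.exp ((ξ k ω) ^ 2 / 4) := by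
      funext ω; rw [hX]; congr 1; ring
    rw [he]
    calc ∫ ω, Real.exp ((ξ k ω) ^ 2 / 4) ∂ℙ
        = ∫ x, Real.exp (x ^ 2 / 4) ∂(Measure.map (ξ k) ℙ) :=
          (integral_map (hmeas k).aemeasurable
            (by fun_prop : Measurable fun x : ℝ => Real.exp (x ^ 2 / 4)).aestronglyMeasurable).symm
      _ = Real.sqrt 2 := by rw [hdist k]; exact wpd_gauss_exp_quarter_sq
  have hintS : Integrable (fun ω => Real.exp ((1/4) * (∑ k ∈ Finset.range (n+1), X k) ω)) ℙ :=
    hXindep.integrable_exp_mul_sum hXmeas (fun k _ => hint1 k)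
  have hch := measure_ge_le_exp_mul_mgf (μ := ℙ) (X := ∑ k ∈ Finset.range (n+1), X k)
      R (by norm_num : (0:ℝ) ≤ 1/4) hintS
  have hmgf : mgf (∑ k ∈ Finset.range (n+1), X k) ℙ (1/4) = Real.sqrt 2 ^ (n+1) := by
    rw [hXindep.mgf_sum hXmeas]
    have hall : ∀ k ∈ Finset.range (n+1), mgf (X k) ℙ (1/4) = Real.sqrt 2 := by
      intro k _
      rw [mgf]
      exact hmgf1 k
    rw [Finset.prod_congr rfl hall, Finset.prod_const, Finset.card_range]
  have hset : {ω | R ≤ ∑ k ∈ Finset.range (n+1), (ξ k ω)^2}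
      = {ω | R ≤ (∑ k ∈ Finset.range (n+1), X k) ω} := by
    ext ω; simp [hX, Finset.sum_apply]
  rw [hset, ← ENNReal.ofReal_toReal (measure_ne_top ℙ _)]
  apply ENNReal.ofReal_le_ofReal
  refine le_trans hch ?_
  rw [hmgf, show -(1/4 : ℝ)*R = -R/4 from by ring]

end Tail

set_option maxHeartbeats 1000000 in
/-- **Uniform derivative bound for the Weyl polynomial on `I_n`.**
For every `m ≥ 0` there are constants `c, C₀ > 0` (depending only on `m`) such that for all
`n ≥ 1` and `N > 0`,
`P(sup_{y ∈ I_n} e^{−y²/2}|P_n^{(m)}(y)| > N n^{m/2}) ≤ C₀ n e^{−c N²}`. -/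
theorem weyl_poly_derivative_sup_bound
    {Ω : Type*} [MeasureSpace Ω] [IsProbabilityMeasure (ℙ : Measure Ω)]
    (ξ : ℕ → Ω → ℝ)
    (hmeas : ∀ k, Measurable (ξ k))
    (hdist : ∀ k, Measure.map (ξ k) ℙ = gaussianReal 0 1)
    (hindep : iIndepFun ξ ℙ)
    (m : ℕ) :
    ∃ c C₀ : ℝ, 0 < c ∧ 0 < C₀ ∧ ∀ n : ℕ, 1 ≤ n → ∀ N : ℝ, 0 < N →
      ℙ {ω : Ω | ∃ y ∈ weylIntvl n,
            Real.exp (-(y ^ 2) / 2) * |(Polynomial.derivative^[m] (weylPoly ξ n ω)).eval y|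
              > N * (n : ℝ) ^ ((m : ℝ) / 2)}
        ≤ ENNReal.ofReal (C₀ * n * Real.exp (-c * N ^ 2)) := by
  classical
  obtain ⟨c, hc_def⟩ : ∃ x : ℝ, x = 1/(32*((m:ℝ)+1)) := ⟨_, rfl⟩
  obtain ⟨K, hK_def⟩ : ∃ x : ℝ, x = 32*Real.sqrt ((m:ℝ)+2)+1 := ⟨_, rfl⟩
  obtain ⟨C₀, hC0_def⟩ : ∃ x : ℝ, x = 2*K + 3 + Real.exp 1 := ⟨_, rfl⟩
  have hm0 : (0:ℝ) ≤ (m:ℝ) := Nat.cast_nonneg m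
  have hsm2 : (0:ℝ) < Real.sqrt ((m:ℝ)+2) := Real.sqrt_pos.mpr (by positivity)
  have hc : 0 < c := by rw [hc_def]; positivity
  have hc4 : c ≤ 1/4 := by
    rw [hc_def, div_le_div_iff₀ (by positivity) (by norm_num)]
    nlinarith only [hm0]
  have hK : 0 < K := by rw [hK_def]; positivity
  have hexp1pos : (0:ℝ) < Real.exp 1 := Real.exp_pos 1
  have hC₀ : 0 < C₀ := by rw [hC0_def]; positivity
  have hC₀3 : 3 ≤ C₀ := by rw [hC0_def]; linarith only [hK, hexp1pos]
  have hC₀e : Real.exp 1 ≤ C₀ := by rw [hC0_def]; linarith only [hK]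
  have hC₀K : 2*K + 3 ≤ C₀ := by rw [hC0_def]; linarith only [hexp1pos]
  refine ⟨c, C₀, hc, hC₀, ?_⟩
  intro n hn N hN
  have hn0 : (0:ℝ) < n := by exact_mod_cast hn
  have hn1 : (1:ℝ) ≤ n := by exact_mod_cast hn
  obtain ⟨sn, hsn_def⟩ : ∃ x : ℝ, x = Real.sqrt n := ⟨_, rfl⟩
  have hsn0 : 0 < sn := hsn_def ▸ Real.sqrt_pos.mpr hn0
  have hsn2 : sn^2 = n := hsn_def ▸ Real.sq_sqrt hn0.le
  have hsn1 : 1 ≤ sn := by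
    rw [hsn_def, show (1:ℝ) = Real.sqrt 1 by rw [Real.sqrt_one]]
    exact Real.sqrt_le_sqrt hn1
  have hsnn : sn ≤ n := by nlinarith only [hsn2, hsn1, hsn0]
  have hnm0 : (0:ℝ) < (n:ℝ)^m := by positivity
  obtain ⟨sq, hsq_def⟩ : ∃ x : ℝ, x = Real.sqrt ((n:ℝ)^m) := ⟨_, rfl⟩
  have hsq0 : 0 < sq := hsq_def ▸ Real.sqrt_pos.mpr hnm0
  have hsq2 : sq^2 = (n:ℝ)^m := hsq_def ▸ Real.sq_sqrt hnm0.le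
  rw [wpd_rpow_eq n m, ← hsq_def]
  have hT : 0 < N * sq := mul_pos hN hsq0
  -- trivial regime
  by_cases htriv : Real.exp (c*N^2) ≤ C₀ * n
  · refine le_trans prob_le_one ?_
    rw [show -c * N^2 = -(c*N^2) by ring, Real.exp_neg]
    rw [show C₀ * n * (Real.exp (c*N^2))⁻¹ = C₀*n / Real.exp (c*N^2) by ring]
    rw [ENNReal.one_le_ofReal, le_div_iff₀ (Real.exp_pos _), one_mul]
    exact htriv
  push_neg at htriv
  have hN1 : 1 ≤ N := by
    have h1 : Real.exp 1 < Real.exp (c*N^2) := by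
      calc Real.exp 1 ≤ C₀ := hC₀e
        _ ≤ C₀ * n := by nlinarith only [hC₀, hn1]
        _ < _ := htriv
    have h2 : 1 < c * N^2 := Real.exp_lt_exp.mp h1
    have hN4 : 4 < N^2 := by nlinarith only [h2, hc4, sq_nonneg N]
    nlinarith only [hN4, hN]
  -- interval endpoints
  obtain ⟨aa, haa_def⟩ : ∃ x : ℝ, x = -Real.sqrt n + (n:ℝ)^((1:ℝ)/6) * Real.log n := ⟨_, rfl⟩
  obtain ⟨bb, hbb_def⟩ : ∃ x : ℝ, x = Real.sqrt n - (n:ℝ)^((1:ℝ)/6) * Real.log n := ⟨_, rfl⟩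
  have hI : weylIntvl n = Set.Icc aa bb := by rw [haa_def, hbb_def]; rfl
  have hoff : 0 ≤ (n:ℝ)^((1:ℝ)/6) * Real.log n :=
    mul_nonneg (Real.rpow_nonneg hn0.le _) (Real.log_nonneg hn1)
  have hsub : Set.Icc aa bb ⊆ Set.Icc (-sn) sn := by
    apply Set.Icc_subset_Icc
    · rw [haa_def, hsn_def]; linarith only [hoff]
    · rw [hbb_def, hsn_def]; linarith only [hoff]
  by_cases hab : aa ≤ bb
  swap
  · have hempty : {ω : Ω | ∃ y ∈ weylIntvl n,
        Real.exp (-(y ^ 2) / 2) * |(Polynomial.derivative^[m] (weylPoly ξ n ω)).eval y|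
          > N * sq} = ∅ := by
      ext ω
      simp only [Set.mem_setOf_eq, Set.mem_empty_iff_false, iff_false, not_exists, not_and]
      intro y hy
      rw [hI] at hy
      exact fun _ => absurd (le_trans hy.1 hy.2) hab
    rw [hempty, measure_empty]
    exact zero_le
  -- main quantities
  obtain ⟨R, hR_def⟩ : ∃ x : ℝ, x = 4*((n:ℝ)+1) + N^2 := ⟨_, rfl⟩
  have hR : 0 < R := by rw [hR_def]; positivity
  obtain ⟨Q1, hQ1_def⟩ : ∃ x : ℝ, x = Real.sqrt (((m:ℝ)+1) * (n:ℝ)^m) := ⟨_, rfl⟩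
  obtain ⟨Q2, hQ2_def⟩ : ∃ x : ℝ, x = Real.sqrt (((m:ℝ)+2) * (n:ℝ)^(m+1)) := ⟨_, rfl⟩
  have hQ1nn : 0 ≤ Q1 := hQ1_def ▸ Real.sqrt_nonneg _
  have hQ2pos : 0 < Q2 := hQ2_def ▸ Real.sqrt_pos.mpr (by positivity)
  have hsR0 : 0 < Real.sqrt R := Real.sqrt_pos.mpr hR
  obtain ⟨L, hL_def⟩ : ∃ x : ℝ, x = Real.sqrt R * (2 * Q2) := ⟨_, rfl⟩
  have hL : 0 < L := by rw [hL_def]; exact mul_pos hsR0 (by linarith only [hQ2pos])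
  obtain ⟨δ, hδ_def⟩ : ∃ x : ℝ, x = (N * sq)/(2*L) := ⟨_, rfl⟩
  have hδ : 0 < δ := by rw [hδ_def]; exact div_pos hT (by linarith only [hL])
  set M : ℕ := Nat.floor ((bb-aa)/δ) + 1 with hM_def
  set g : ℕ → ℝ := fun i => aa + i * δ with hg_def
  set B : Set Ω := {ω | R ≤ ∑ k ∈ Finset.range (n+1), (ξ k ω)^2} with hB_def
  set A : ℕ → Set Ω := fun i => {ω | (N*sq)/2 ≤
    |∑ k ∈ Finset.range (n+1), (Real.exp (-((g i) ^ 2) / 2) * wpdB m k (g i)) * ξ k ω|}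
    with hA_def
  -- Step 1: inclusion
  have hincl : {ω : Ω | ∃ y ∈ weylIntvl n,
      Real.exp (-(y ^ 2) / 2) * |(Polynomial.derivative^[m] (weylPoly ξ n ω)).eval y|
        > N * sq} ⊆ B ∪ ⋃ i ∈ Finset.range M, A i := by
    intro ω hω
    obtain ⟨y, hyI, hgt⟩ := hω
    rw [hI] at hyI
    by_cases hBc : R ≤ ∑ k ∈ Finset.range (n+1), (ξ k ω)^2
    · exact Or.inl hBc
    push_neg at hBc
    have hWs : Real.sqrt (∑ k ∈ Finset.range (n+1), (ξ k ω)^2) ≤ Real.sqrt R :=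
      Real.sqrt_le_sqrt hBc.le
    set i : ℕ := Nat.floor ((y - aa)/δ) with hi_def
    have hya : 0 ≤ y - aa := by linarith only [hyI.1]
    have hiM : i < M := by
      rw [hM_def, Nat.lt_succ_iff, hi_def]
      exact Nat.floor_le_floor ((div_le_div_iff_of_pos_right hδ).mpr (by linarith only [hyI.2]))
    have hfl1 : (i:ℝ) * δ ≤ y - aa := by
      have h1 : (i:ℝ) ≤ (y - aa)/δ := Nat.floor_le (div_nonneg hya hδ.le)
      exact (le_div_iff₀ hδ).mp h1
    have hfl2 : y - aa < ((i:ℝ)+1) * δ := by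
      have h2 : (y - aa)/δ < (i:ℝ) + 1 := Nat.lt_floor_add_one _
      exact (div_lt_iff₀ hδ).mp h2
    have hgle : g i ≤ y := by
      simp only [hg_def]
      linarith only [hfl1]
    have hgd : y - g i ≤ δ := by
      simp only [hg_def]
      linarith only [hfl2]
    have hga : aa ≤ g i := by
      simp only [hg_def]
      have h3 : 0 ≤ (i:ℝ) * δ := mul_nonneg (Nat.cast_nonneg i) hδ.le
      linarith only [h3]
    have hy_s : y ∈ Set.Icc (-sn) sn := hsub hyI
    have hx_s : g i ∈ Set.Icc (-sn) sn := hsub ⟨hga, le_trans hgle hyI.2⟩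
    set p : Polynomial ℝ := Polynomial.derivative^[m] (weylPoly ξ n ω) with hp_def
    set F : ℝ → ℝ := fun z => Real.exp (-(z ^ 2) / 2) * p.eval z with hF_def
    set F' : ℝ → ℝ := fun z => (Real.exp (-(z ^ 2) / 2) * (-z)) * p.eval z
      + Real.exp (-(z ^ 2) / 2) * (p.derivative.eval z) with hF'_def
    have hderiv : ∀ z ∈ Set.Icc (-sn) sn,
        HasDerivWithinAt F (F' z) (Set.Icc (-sn) sn) z := by
      intro z _
      have h2 : HasDerivAt (fun w : ℝ => -(w^2)/2) _ z := ((hasDerivAt_pow 2 z).neg).div_const 2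
      have h1 : HasDerivAt (fun w : ℝ => -(w^2)/2) (-z) z := by
        convert h2 using 1
        norm_num
        ring
      have he : HasDerivAt (fun w : ℝ => Real.exp (-(w^2)/2))
          (Real.exp (-(z^2)/2) * (-z)) z := h1.exp
      exact ((he.mul (p.hasDerivAt z)).hasDerivWithinAt)
    have hbound : ∀ z ∈ Set.Icc (-sn) sn, ‖F' z‖ ≤ L := by
      intro z hz
      have hzabs : |z| ≤ sn := abs_le.mpr ⟨hz.1, hz.2⟩
      have heval : p.eval z = ∑ k ∈ Finset.range (n+1), ξ k ω * wpdB m k z :=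
        wpd_eval_iter ξ n ω m z
      have heval' : p.derivative.eval z
          = ∑ k ∈ Finset.range (n+1), ξ k ω * wpdB (m+1) k z := by
        have hstep : p.derivative = Polynomial.derivative^[m+1] (weylPoly ξ n ω) :=
          (Function.iterate_succ_apply' _ m _).symm
        rw [hstep]
        exact wpd_eval_iter ξ n ω (m+1) z
      have h1 : |p.eval z| ≤ Real.sqrt R * (Q1 * Real.exp (z^2/2)) := by
        rw [heval, hQ1_def]
        refine le_trans (wpd_cs (fun k => ξ k ω) m n z) ?_
        exact mul_le_mul_of_nonneg_right hWs (by positivity)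
      have h2 : |p.derivative.eval z| ≤ Real.sqrt R * (Q2 * Real.exp (z^2/2)) := by
        rw [heval', hQ2_def]
        refine le_trans (wpd_cs (fun k => ξ k ω) (m+1) n z) ?_
        have hcast : (((m+1:ℕ):ℝ) + 1) * (n:ℝ)^(m+1) = ((m:ℝ)+2) * (n:ℝ)^(m+1) := by
          push_cast; ring
        rw [hcast]
        exact mul_le_mul_of_nonneg_right hWs (by positivity)
      have hQ1Q2 : |z| * Q1 ≤ Q2 := by
        have hsnQ1 : sn * Q1 = Real.sqrt ((n:ℝ) * (((m:ℝ)+1) * (n:ℝ)^m)) := by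
          rw [hQ1_def, hsn_def, ← Real.sqrt_mul hn0.le]
        have hmono : Real.sqrt ((n:ℝ) * (((m:ℝ)+1) * (n:ℝ)^m)) ≤ Q2 := by
          rw [hQ2_def]
          apply Real.sqrt_le_sqrt
          calc (n:ℝ) * (((m:ℝ)+1) * (n:ℝ)^m) = ((m:ℝ)+1) * ((n:ℝ)^m * n) := by ring
            _ ≤ ((m:ℝ)+2) * ((n:ℝ)^m * n) := by
                apply mul_le_mul_of_nonneg_right (by linarith only []) (by positivity)
            _ = ((m:ℝ)+2) * (n:ℝ)^(m+1) := by rw [pow_succ]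
        calc |z| * Q1 ≤ sn * Q1 := mul_le_mul_of_nonneg_right hzabs hQ1nn
          _ = _ := hsnQ1
          _ ≤ Q2 := hmono
      have hEE : Real.exp (-(z^2)/2) * Real.exp (z^2/2) = 1 := by
        rw [← Real.exp_add, show -(z^2)/2 + z^2/2 = 0 by ring, Real.exp_zero]
      have hEpos : (0:ℝ) < Real.exp (-(z^2)/2) := Real.exp_pos _
      rw [Real.norm_eq_abs, hF'_def]
      calc |(Real.exp (-(z ^ 2) / 2) * (-z)) * p.eval z
            + Real.exp (-(z ^ 2) / 2) * (p.derivative.eval z)|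
          ≤ |(Real.exp (-(z ^ 2) / 2) * (-z)) * p.eval z|
            + |Real.exp (-(z ^ 2) / 2) * (p.derivative.eval z)| := abs_add_le _ _
        _ = Real.exp (-(z ^ 2) / 2) * |z| * |p.eval z|
            + Real.exp (-(z ^ 2) / 2) * |p.derivative.eval z| := by
            rw [abs_mul, abs_mul, abs_mul, abs_neg, abs_of_pos hEpos]
        _ ≤ Real.exp (-(z ^ 2) / 2) * |z| * (Real.sqrt R * (Q1 * Real.exp (z^2/2)))
            + Real.exp (-(z ^ 2) / 2) * (Real.sqrt R * (Q2 * Real.exp (z^2/2))) := by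
            refine add_le_add ?_ ?_
            · exact mul_le_mul_of_nonneg_left h1 (by positivity)
            · exact mul_le_mul_of_nonneg_left h2 (by positivity)
        _ = Real.sqrt R * (|z| * Q1) * (Real.exp (-(z^2)/2) * Real.exp (z^2/2))
            + Real.sqrt R * Q2 * (Real.exp (-(z^2)/2) * Real.exp (z^2/2)) := by ring
        _ = Real.sqrt R * (|z| * Q1) + Real.sqrt R * Q2 := by rw [hEE]; ring
        _ ≤ Real.sqrt R * Q2 + Real.sqrt R * Q2 :=
            add_le_add (mul_le_mul_of_nonneg_left hQ1Q2 (Real.sqrt_nonneg _)) (le_refl _)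
        _ = L := by rw [hL_def]; ring
    have hlip := Convex.norm_image_sub_le_of_norm_hasDerivWithin_le
      hderiv hbound (convex_Icc _ _) hx_s hy_s
    rw [Real.norm_eq_abs, Real.norm_eq_abs] at hlip
    have hLδ : L * |y - g i| ≤ (N*sq)/2 := by
      have habs : |y - g i| ≤ δ := by
        rw [abs_of_nonneg (by linarith only [hgle])]
        exact hgd
      calc L * |y - g i| ≤ L * δ := mul_le_mul_of_nonneg_left habs hL.le
        _ = (N*sq)/2 := by
          rw [hδ_def]
          field_simp
    have hFy : N * sq < |F y| := by
      rw [hF_def]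
      simp only
      rw [abs_mul, abs_of_pos (Real.exp_pos _)]
      exact hgt
    have hFx : (N*sq)/2 ≤ |F (g i)| := by
      have habs := abs_sub_abs_le_abs_sub (F y) (F (g i))
      have h5 : |F y - F (g i)| ≤ (N*sq)/2 := le_trans hlip hLδ
      linarith only [habs, h5, hFy]
    right
    rw [Set.mem_iUnion]
    refine ⟨i, ?_⟩
    rw [Set.mem_iUnion]
    refine ⟨Finset.mem_range.mpr hiM, ?_⟩
    simp only [hA_def, Set.mem_setOf_eq]
    have hsum_eq : ∑ k ∈ Finset.range (n+1),
        (Real.exp (-((g i) ^ 2) / 2) * wpdB m k (g i)) * ξ k ω = F (g i) := by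
      rw [hF_def]
      simp only
      rw [wpd_eval_iter ξ n ω m (g i), Finset.mul_sum]
      exact Finset.sum_congr rfl fun k _ => by ring
    rw [hsum_eq]
    exact hFx
  -- Step 2: bound for B
  have hPB : ℙ B ≤ ENNReal.ofReal (Real.exp (-(N^2)/4)) := by
    refine le_trans (wpd_sq_tail ξ hmeas hdist hindep n R hR.le) (ENNReal.ofReal_le_ofReal ?_)
    have h1 : Real.sqrt 2 ≤ Real.exp (1/2) := by
      rw [Real.exp_half]
      apply Real.sqrt_le_sqrt
      have := Real.add_one_le_exp (1:ℝ)
      linarith only [this]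
    have h2 : Real.sqrt 2 ^ (n+1) ≤ Real.exp (1/2) ^ (n+1) :=
      pow_le_pow_left₀ (Real.sqrt_nonneg _) h1 _
    have h3 : Real.exp (1/2) ^ (n+1) = Real.exp (((n:ℝ)+1) * (1/2)) := by
      rw [← Real.exp_nat_mul]
      congr 1
      push_cast
      ring
    calc Real.exp (-R/4) * Real.sqrt 2 ^ (n+1)
        ≤ Real.exp (-R/4) * Real.exp (((n:ℝ)+1) * (1/2)) := by
          rw [← h3]; exact mul_le_mul_of_nonneg_left h2 (Real.exp_pos _).le
      _ = Real.exp (-R/4 + ((n:ℝ)+1) * (1/2)) := by rw [← Real.exp_add]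
      _ ≤ Real.exp (-(N^2)/4) := by
          apply Real.exp_le_exp.mpr
          rw [hR_def]
          linarith only [hn0]
  -- Step 3: bound for each A i
  have hPA : ∀ i : ℕ, ℙ (A i) ≤ ENNReal.ofReal (2 * Real.exp (-(4*c)*N^2)) := by
    intro i
    obtain ⟨x, hx_def⟩ : ∃ x : ℝ, x = g i := ⟨_, rfl⟩
    have hsum : ∑ k ∈ Finset.range (n+1),
        ((Real.exp (-(x ^ 2) / 2) * wpdB m k x))^2 ≤ ((m:ℝ)+1) * (n:ℝ)^m := by
      have h21 : (Real.exp (-(x^2)/2))^2 = Real.exp (-(x^2)) := by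
        rw [← Real.exp_nat_mul]
        congr 1
        push_cast
        ring
      calc ∑ k ∈ Finset.range (n+1), ((Real.exp (-(x ^ 2) / 2) * wpdB m k x))^2
          = Real.exp (-(x^2)) * ∑ k ∈ Finset.range (n+1), (wpdB m k x)^2 := by
            rw [Finset.mul_sum]
            exact Finset.sum_congr rfl fun k _ => by rw [mul_pow, h21]
        _ ≤ Real.exp (-(x^2)) * (((m:ℝ)+1) * (n:ℝ)^m * Real.exp (x^2)) :=
            mul_le_mul_of_nonneg_left (wpd_b_sq_sum m n x) (Real.exp_pos _).le
        _ = ((m:ℝ)+1) * (n:ℝ)^m * (Real.exp (-(x^2)) * Real.exp (x^2)) := by ring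
        _ = ((m:ℝ)+1) * (n:ℝ)^m := by
            rw [← Real.exp_add, show -(x^2) + x^2 = 0 by ring, Real.exp_zero, mul_one]
    have htail := wpd_lin_tail ξ hmeas hdist hindep
      (fun k => Real.exp (-(x ^ 2) / 2) * wpdB m k x) n (((m:ℝ)+1) * (n:ℝ)^m)
      ((N*sq)/2) (mul_pos (by positivity) hnm0) hsum (half_pos hT)
    rw [hx_def] at htail
    refine le_trans htail (ENNReal.ofReal_le_ofReal ?_)
    have hexp_eq : -((N*sq)/2)^2/(2*(((m:ℝ)+1) * (n:ℝ)^m)) = -(4*c)*N^2 := by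
      rw [hc_def]
      have h1 : ((N*sq)/2)^2 = N^2 * (n:ℝ)^m / 4 := by
        rw [div_pow, mul_pow, hsq2]
        norm_num
      have h2 : ((n:ℝ)^m) ≠ 0 := ne_of_gt hnm0
      have h3 : ((m:ℝ)+1) ≠ 0 := by positivity
      rw [h1]
      field_simp
      ring
    rw [hexp_eq]
  -- Step 4: count bound
  have hM_le : (M:ℝ) ≤ K * (n:ℝ)^2 := by
    have hba0' : (0:ℝ) ≤ bb - aa := by linarith only [hab]
    have hfloor : (M:ℝ) ≤ (bb-aa)/δ + 1 := by
      rw [hM_def]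
      push_cast
      have h4 := Nat.floor_le (div_nonneg hba0' hδ.le)
      linarith only [h4]
    have hba : bb - aa ≤ 2*sn := by
      rw [hbb_def, haa_def, hsn_def]
      linarith only [hoff]
    have hba0 : 0 ≤ bb - aa := by linarith only [hab]
    have hsR : Real.sqrt R ≤ 3*sn + N := by
      have hRle : R ≤ (3*sn + N)^2 := by
        rw [hR_def]
        nlinarith only [hsn2, hn1, mul_nonneg hsn0.le hN.le, hsn0]
      calc Real.sqrt R ≤ Real.sqrt ((3*sn+N)^2) := Real.sqrt_le_sqrt hRle
        _ = 3*sn + N := Real.sqrt_sq (by positivity)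
    have hQ2eq : Q2 = Real.sqrt ((m:ℝ)+2) * (sn * sq) := by
      rw [hQ2_def, pow_succ,
        show ((m:ℝ)+2) * ((n:ℝ)^m * n) = ((m:ℝ)+2) * ((n:ℝ) * (n:ℝ)^m) by ring,
        Real.sqrt_mul (by positivity), Real.sqrt_mul hn0.le, hsn_def, hsq_def]
    have hquot : (bb-aa)/δ ≤ 32*Real.sqrt ((m:ℝ)+2)*(n:ℝ)^2 := by
      rw [hδ_def, div_div_eq_mul_div, div_le_iff₀ hT]
      have hL' : L ≤ (3*sn+N) * (2 * (Real.sqrt ((m:ℝ)+2) * (sn * sq))) := by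
        rw [hL_def, hQ2eq]
        apply mul_le_mul_of_nonneg_right hsR (by positivity)
      have hnum : (bb-aa)*(2*L)
          ≤ (2*sn)*(2*((3*sn+N) * (2 * (Real.sqrt ((m:ℝ)+2) * (sn * sq))))) := by
        apply mul_le_mul hba ?_ (by linarith only [hL]) (by linarith only [hsn0])
        apply mul_le_mul_of_nonneg_left hL' (by norm_num)
      refine le_trans hnum ?_
      have hid : (2*sn)*(2*((3*sn+N) * (2 * (Real.sqrt ((m:ℝ)+2) * (sn * sq)))))
          = 8*Real.sqrt ((m:ℝ)+2)*(sn^2)*(3*sn+N)*sq := by ring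
      rw [hid, hsn2]
      have hkey : 3*sn + N ≤ 4*(n:ℝ)*N := by
        nlinarith only [hsnn, hN1, hn1, hsn0]
      calc 8*Real.sqrt ((m:ℝ)+2)*(n:ℝ)*(3*sn+N)*sq
          ≤ 8*Real.sqrt ((m:ℝ)+2)*(n:ℝ)*(4*(n:ℝ)*N)*sq := by
            apply mul_le_mul_of_nonneg_right ?_ hsq0.le
            apply mul_le_mul_of_nonneg_left hkey (by positivity)
        _ = 32*Real.sqrt ((m:ℝ)+2)*(n:ℝ)^2*(N*sq) := by ring
    calc (M:ℝ) ≤ (bb-aa)/δ + 1 := hfloor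
      _ ≤ 32*Real.sqrt ((m:ℝ)+2)*(n:ℝ)^2 + 1 := by linarith only [hquot]
      _ ≤ K * (n:ℝ)^2 := by
          rw [hK_def]
          nlinarith only [hn1, hsm2, hn0]
  -- Step 5: combine
  calc ℙ {ω : Ω | ∃ y ∈ weylIntvl n,
        Real.exp (-(y ^ 2) / 2) * |(Polynomial.derivative^[m] (weylPoly ξ n ω)).eval y|
          > N * sq}
      ≤ ℙ (B ∪ ⋃ i ∈ Finset.range M, A i) := measure_mono hincl
    _ ≤ ℙ B + ℙ (⋃ i ∈ Finset.range M, A i) := measure_union_le _ _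
    _ ≤ ℙ B + ∑ i ∈ Finset.range M, ℙ (A i) :=
        add_le_add_right (measure_biUnion_finset_le _ _) _
    _ ≤ ENNReal.ofReal (Real.exp (-(N^2)/4))
        + ∑ i ∈ Finset.range M, ENNReal.ofReal (2 * Real.exp (-(4*c)*N^2)) :=
        add_le_add hPB (Finset.sum_le_sum fun i _ => hPA i)
    _ = ENNReal.ofReal (Real.exp (-(N^2)/4))
        + ENNReal.ofReal ((M:ℝ) * (2 * Real.exp (-(4*c)*N^2))) := by
        rw [Finset.sum_const, Finset.card_range, nsmul_eq_mul,
          ← ENNReal.ofReal_natCast M, ← ENNReal.ofReal_mul (Nat.cast_nonneg M)]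
    _ = ENNReal.ofReal (Real.exp (-(N^2)/4) + (M:ℝ) * (2 * Real.exp (-(4*c)*N^2))) := by
        rw [← ENNReal.ofReal_add (Real.exp_pos _).le (by positivity)]
    _ ≤ ENNReal.ofReal (C₀ * n * Real.exp (-c * N^2)) := by
        apply ENNReal.ofReal_le_ofReal
        obtain ⟨u, hu_def⟩ : ∃ x : ℝ, x = Real.exp (-(c*N^2)) := ⟨_, rfl⟩
        have hu0 : 0 < u := hu_def ▸ Real.exp_pos _
        have hu1 : u ≤ 1 := by
          rw [hu_def]
          apply Real.exp_le_one_iff.mpr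
          have h6 : 0 ≤ c*N^2 := by positivity
          linarith only [h6]
        have hnu : C₀ * n * u < 1 := by
          have h7 : C₀ * n * u < Real.exp (c*N^2) * u :=
            mul_lt_mul_of_pos_right htriv hu0
          have h8 : Real.exp (c*N^2) * u = 1 := by
            rw [hu_def, ← Real.exp_add, show c*N^2 + -(c*N^2) = 0 by ring, Real.exp_zero]
          linarith only [h7, h8]
        have h4c : Real.exp (-(4*c)*N^2) = u^4 := by
          rw [hu_def, ← Real.exp_nat_mul]
          congr 1
          push_cast
          ring
        have hA1 : Real.exp (-(N^2)/4) ≤ u := by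
          rw [hu_def]
          apply Real.exp_le_exp.mpr
          nlinarith only [hc4, sq_nonneg N]
        rw [show -c * N^2 = -(c*N^2) by ring, ← hu_def, h4c]
        have hnu2 : ((n:ℝ)*u)^2 ≤ (1/C₀)^2 := by
          have h9 : (n:ℝ)*u ≤ 1/C₀ := by
            rw [le_div_iff₀ hC₀]
            nlinarith only [hnu]
          have h10 : 0 ≤ (n:ℝ)*u := by positivity
          nlinarith only [h9, h10]
        have h2K : 2*K ≤ C₀^2 := by
          nlinarith only [hC₀3, hC₀K, hK, hC₀]
        have hKC : 2*K*(1/C₀)^2 ≤ 1 := by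
          rw [show 2*K*(1/C₀)^2 = 2*K/C₀^2 by ring, div_le_one (pow_pos hC₀ 2)]
          exact h2K
        have hMu : (M:ℝ) * (2*u^4) ≤ 2*K*(1/C₀)^2*u^2 := by
          calc (M:ℝ) * (2*u^4) ≤ (K*(n:ℝ)^2) * (2*u^4) :=
              mul_le_mul_of_nonneg_right hM_le (by positivity)
            _ = 2*K*((n:ℝ)*u)^2*u^2 := by ring
            _ ≤ 2*K*(1/C₀)^2*u^2 := by
                apply mul_le_mul_of_nonneg_right ?_ (sq_nonneg u)
                apply mul_le_mul_of_nonneg_left hnu2 (by linarith only [hK])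
        have hu2 : u^2 ≤ u := by nlinarith only [hu0, hu1]
        have h3 : 2*K*(1/C₀)^2*u^2 ≤ u := by
          calc 2*K*(1/C₀)^2*u^2 ≤ 1*u^2 :=
              mul_le_mul_of_nonneg_right hKC (sq_nonneg u)
            _ = u^2 := by ring
            _ ≤ u := hu2
        have h4 : 2*u ≤ C₀ * n * u := by
          have h11 : 2 ≤ C₀ * n := by nlinarith only [hC₀3, hn1, hC₀]
          nlinarith only [h11, hu0]
        linarith only [hA1, hMu, h3, h4]


end
end

section
/- Let F: ℝ → ℝ be twice continuously differentiable and G: ℝ → ℝ be continuous. Let ε₁, M, M' > 0, let x₀ ∈ ℝ, and set I = [x₀ − ε₁/M, x₀ + ε₁/M]. Assume that F(x₀) = 0, |F'(x₀)| ≥ ε₁, |F''(x)| ≤ M for all x ∈ I, and sup_{x ∈ I} |F(x) − G(x)| ≤ M'. If M' ≤ ε₁²/(4M), then G has a root in I, i.e., there exists y ∈ I with G(y) = 0. -/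
open Set

/-- Second-order Taylor estimate at the left endpoint. -/
lemma taylor2 (F : ℝ → ℝ) (hF : ContDiff ℝ 2 F) (M a b : ℝ) (hab : a < b)
    (hM : ∀ x ∈ Set.Icc a b, |deriv (deriv F) x| ≤ M) :
    |F b - F a - deriv F a * (b - a)| ≤ M * (b - a) ^ 2 / 2 := by
  have hu : UniqueDiffOn ℝ (Set.Icc a b) := uniqueDiffOn_Icc hab
  have hFd : Differentiable ℝ F := hF.differentiable (by norm_num)
  have hF2 : ContDiff ℝ ((1:ℕ) + 1) F := by exact_mod_cast hF
  have hF'ct : ContDiff ℝ 1 (deriv F) := (contDiff_succ_iff_deriv.mp hF2).2.2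
  have hF'd : Differentiable ℝ (deriv F) := hF'ct.differentiable (by norm_num)
  -- the first iterated derivative within agrees with `deriv F` on `Icc a b`
  have h1 : ∀ y ∈ Set.Icc a b, iteratedDerivWithin 1 F (Set.Icc a b) y = deriv F y := by
    intro y hy
    rw [iteratedDerivWithin_one]
    exact ((hFd y).hasDerivAt.hasDerivWithinAt).derivWithin (hu y hy)
  have hf' : DifferentiableOn ℝ (iteratedDerivWithin 1 F (Set.Icc a b)) (Set.Ioo a b) := by
    apply (hF'd.differentiableOn (s := Set.Ioo a b)).congr
    intro y hy
    exact h1 y (Set.Ioo_subset_Icc_self hy)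
  have hcd : ContDiffOn ℝ 1 F (Set.Icc a b) := (hF.of_le (by norm_num)).contDiffOn
  have html := taylor_mean_remainder_lagrange (n := 1) hab.ne
    (by rwa [Set.uIcc_of_le hab.le]) (by rwa [Set.uIcc_of_le hab.le, Set.uIoo_of_le hab.le])
  rw [Set.uIcc_of_le hab.le, Set.uIoo_of_le hab.le] at html
  obtain ⟨x', hx', heq⟩ := html
  -- identify the second iterated derivative within with `deriv (deriv F)` at interior points
  have h2 : iteratedDerivWithin 2 F (Set.Icc a b) x' = deriv (deriv F) x' := by
    have hx'i : x' ∈ Set.Icc a b := Set.Ioo_subset_Icc_self hx'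
    have : iteratedDerivWithin 2 F (Set.Icc a b) x'
        = derivWithin (iteratedDerivWithin 1 F (Set.Icc a b)) (Set.Icc a b) x' :=
      congrFun iteratedDerivWithin_succ x'
    rw [this, derivWithin_congr h1 (h1 x' hx'i),
      derivWithin_of_mem_nhds (Icc_mem_nhds hx'.1 hx'.2)]
  -- compute the Taylor polynomial of degree 1
  have htp : taylorWithinEval F 1 (Set.Icc a b) a b = F a + deriv F a * (b - a) := by
    rw [taylor_within_apply]
    simp [Finset.sum_range_succ, h1 a (Set.left_mem_Icc.mpr hab.le), mul_comm]
  rw [htp] at heq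
  have hb : |F b - (F a + deriv F a * (b - a))|
      = |deriv (deriv F) x' * (b - a) ^ 2 / 2| := by
    rw [heq, h2]; norm_num
  have : |F b - F a - deriv F a * (b - a)| = |deriv (deriv F) x' * (b - a) ^ 2 / 2| := by
    rw [← hb]; ring_nf
  rw [this, abs_div, abs_mul, abs_pow]
  have h2b : |deriv (deriv F) x'| ≤ M := hM x' (Set.Ioo_subset_Icc_self hx')
  have hba : |b - a| = b - a := abs_of_pos (by linarith)
  rw [hba]
  have : |(2 : ℝ)| = 2 := by norm_num
  rw [this]
  have hpow : (0:ℝ) ≤ (b - a) ^ 2 := sq_nonneg _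
  apply div_le_div_of_nonneg_right ?_ (by norm_num) |>.trans_eq rfl
  exact mul_le_mul_of_nonneg_right h2b hpow

/-- Second-order Taylor estimate at the right endpoint, via reflection. -/
lemma taylor2' (F : ℝ → ℝ) (hF : ContDiff ℝ 2 F) (M a b : ℝ) (hab : a < b)
    (hM : ∀ x ∈ Set.Icc a b, |deriv (deriv F) x| ≤ M) :
    |F a - F b - deriv F b * (a - b)| ≤ M * (b - a) ^ 2 / 2 := by
  set c := a + b with hc
  set Fr : ℝ → ℝ := fun x => F (c - x) with hFr
  have hFrC : ContDiff ℝ 2 Fr := hF.comp (contDiff_const.sub contDiff_id)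
  have hd1 : deriv Fr = fun x => -deriv F (c - x) := by
    funext x; exact deriv_comp_const_sub F c x
  have hd2 : ∀ x, deriv (deriv Fr) x = deriv (deriv F) (c - x) := by
    intro x
    rw [hd1]
    have : (fun x => -deriv F (c - x)) = fun x => -((fun y => deriv F (c - y)) x) := rfl
    rw [this, deriv.fun_neg, deriv_comp_const_sub, neg_neg]
  have hM' : ∀ x ∈ Set.Icc a b, |deriv (deriv Fr) x| ≤ M := by
    intro x hx
    rw [hd2]
    obtain ⟨h1, h2⟩ := hx
    refine hM _ ⟨?_, ?_⟩ <;> simp only [hc] <;> linarith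
  have key := taylor2 Fr hFrC M a b hab hM'
  have e1 : Fr b = F a := by simp [hFr, hc]
  have e2 : Fr a = F b := by simp [hFr, hc]
  have e3 : deriv Fr a = -deriv F b := by
    rw [hd1]; simp [hc]
  rw [e1, e2, e3] at key
  have : F a - F b - -deriv F b * (b - a) = F a - F b - deriv F b * (a - b) := by ring
  rwa [this] at key

/-- Main argument when the derivative at `x₀` is positive. -/
lemma root_comparison_aux
    (F G : ℝ → ℝ)
    (hF : ContDiff ℝ 2 F)
    (hG : Continuous G)
    (ε₁ M M' : ℝ) (hε₁ : 0 < ε₁) (hM : 0 < M) (hM' : 0 < M')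
    (x₀ : ℝ)
    (hFx₀ : F x₀ = 0)
    (hF' : ε₁ ≤ deriv F x₀)
    (hF'' : ∀ x ∈ Set.Icc (x₀ - ε₁ / M) (x₀ + ε₁ / M), |deriv (deriv F) x| ≤ M)
    (hFG : ∀ x ∈ Set.Icc (x₀ - ε₁ / M) (x₀ + ε₁ / M), |F x - G x| ≤ M')
    (hsmall : M' ≤ ε₁ ^ 2 / (4 * M)) :
    ∃ y ∈ Set.Icc (x₀ - ε₁ / M) (x₀ + ε₁ / M), G y = 0 := by
  set h := ε₁ / M with hh
  have hhpos : 0 < h := div_pos hε₁ hM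
  set a := x₀ - h with ha
  set b := x₀ + h with hb
  have hab : a < b := by simp only [ha, hb]; linarith
  have hax : a < x₀ := by simp only [ha]; linarith
  have hxb : x₀ < b := by simp only [hb]; linarith
  have hsub1 : Set.Icc x₀ b ⊆ Set.Icc a b := Set.Icc_subset_Icc (by linarith) le_rfl
  have hsub2 : Set.Icc a x₀ ⊆ Set.Icc a b := Set.Icc_subset_Icc le_rfl (by linarith)
  -- lower bound for F b
  have hTb := taylor2 F hF M x₀ b hxb (fun x hx => hF'' x (hsub1 hx))
  have hTa := taylor2' F hF M a x₀ hax (fun x hx => hF'' x (hsub2 hx))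
  have hbx : b - x₀ = h := by simp [hb]
  have hxa : a - x₀ = -h := by simp [ha]
  have hhM : M * h ^ 2 / 2 = ε₁ * h / 2 := by
    rw [hh]; field_simp
  have hεh : ε₁ * h = ε₁ ^ 2 / M := by rw [hh]; field_simp
  have hFb : ε₁ ^ 2 / (2 * M) ≤ F b := by
    rw [hbx, hFx₀, hhM] at hTb
    have h1 : -(ε₁ * h / 2) ≤ F b - 0 - deriv F x₀ * h := (abs_le.mp hTb).1
    have h2 : deriv F x₀ * h ≥ ε₁ * h := mul_le_mul_of_nonneg_right hF' hhpos.le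
    have : F b ≥ ε₁ * h - ε₁ * h / 2 := by linarith
    have hv : ε₁ * h - ε₁ * h / 2 = ε₁ ^ 2 / (2 * M) := by
      rw [hεh]; field_simp; ring
    linarith [hv ▸ this]
  have hFa : F a ≤ -(ε₁ ^ 2 / (2 * M)) := by
    rw [hxa, hFx₀] at hTa
    have heq : x₀ - a = h := by simp [ha]
    rw [heq, hhM] at hTa
    have h1 : F a - 0 - deriv F x₀ * (-h) ≤ ε₁ * h / 2 := le_of_abs_le hTa
    have h2 : deriv F x₀ * h ≥ ε₁ * h := mul_le_mul_of_nonneg_right hF' hhpos.le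
    have hv : ε₁ * h - ε₁ * h / 2 = ε₁ ^ 2 / (2 * M) := by
      rw [hεh]; field_simp; ring
    nlinarith
  -- transfer to G
  have hmem_a : a ∈ Set.Icc a b := Set.left_mem_Icc.mpr hab.le
  have hmem_b : b ∈ Set.Icc a b := Set.right_mem_Icc.mpr hab.le
  have hGa : G a < 0 := by
    have := hFG a hmem_a
    have h1 := (abs_le.mp this).1
    have hq : ε₁ ^ 2 / (4 * M) < ε₁ ^ 2 / (2 * M) := by
      apply div_lt_div_of_pos_left (by positivity) (by linarith) (by linarith)
    linarith
  have hGb : 0 < G b := by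
    have := hFG b hmem_b
    have h2 := (abs_le.mp this).2
    have hq : ε₁ ^ 2 / (4 * M) < ε₁ ^ 2 / (2 * M) := by
      apply div_lt_div_of_pos_left (by positivity) (by linarith) (by linarith)
    linarith
  have := intermediate_value_Icc hab.le hG.continuousOn
  have h0 : (0 : ℝ) ∈ Set.Icc (G a) (G b) := ⟨hGa.le, hGb.le⟩
  obtain ⟨y, hy, hy0⟩ := this h0
  exact ⟨y, hy, hy0⟩

/-- **Deterministic root comparison.**
If `F` is `C²`, `G` is continuous, `F(x₀) = 0`, `|F'(x₀)| ≥ ε₁`, `|F''| ≤ M` on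
`I = [x₀ − ε₁/M, x₀ + ε₁/M]`, and `sup_I |F − G| ≤ M'` with `M' ≤ ε₁²/(4M)`, then `G`
has a root in `I`. -/
theorem root_comparison
    (F G : ℝ → ℝ)
    (hF : ContDiff ℝ 2 F)
    (hG : Continuous G)
    (ε₁ M M' : ℝ) (hε₁ : 0 < ε₁) (hM : 0 < M) (hM' : 0 < M')
    (x₀ : ℝ)
    (hFx₀ : F x₀ = 0)
    (hF' : ε₁ ≤ |deriv F x₀|)
    (hF'' : ∀ x ∈ Set.Icc (x₀ - ε₁ / M) (x₀ + ε₁ / M), |deriv (deriv F) x| ≤ M)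
    (hFG : ∀ x ∈ Set.Icc (x₀ - ε₁ / M) (x₀ + ε₁ / M), |F x - G x| ≤ M')
    (hsmall : M' ≤ ε₁ ^ 2 / (4 * M)) :
    ∃ y ∈ Set.Icc (x₀ - ε₁ / M) (x₀ + ε₁ / M), G y = 0 := by
  rcases le_abs.mp hF' with hpos | hneg
  · exact root_comparison_aux F G hF hG ε₁ M M' hε₁ hM hM' x₀ hFx₀ hpos hF'' hFG hsmall
  · -- apply the aux lemma to `-F` and `-G`
    have hFneg : ContDiff ℝ 2 (fun x => -F x) := hF.neg
    have hd1 : deriv (fun x => -F x) = fun x => -deriv F x := deriv.neg'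
    have hd2 : ∀ x, deriv (deriv (fun x => -F x)) x = -deriv (deriv F) x := by
      intro x; rw [hd1, deriv.fun_neg]
    obtain ⟨y, hy, hy0⟩ := root_comparison_aux (fun x => -F x) (fun x => -G x)
      hFneg hG.neg ε₁ M M' hε₁ hM hM' x₀ (by simp [hFx₀])
      (by rw [hd1]; simpa using hneg)
      (by intro x hx; rw [hd2]; simpa using hF'' x hx)
      (by intro x hx
          show |-F x - -G x| ≤ M'
          rw [show -F x - -G x = -(F x - G x) by ring, abs_neg]
          exact hFG x hx)
      hsmall
    exact ⟨y, hy, by linarith⟩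
end
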